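/- Let V = ⨁_{k ∈ ℤ} V_k be as in the context, with ω a nondegenerate alternating bilinear form on V such that ω(v, w) = 0 whenever v ∈ V_j, w ∈ V_k and j + k ≠ 1. Assume moreover that the grading is definite, i.e. V_k = 0 for all k < 0. Then V_k = 0 for all k ≥ 2 as well, so that V = V_0 ⊕ V_1. -/

import Mathlib

/-- Let `V = ⨁_{k ∈ ℤ} V_k` be a finite-dimensional complex vector space with an
internal direct sum decomposition, and `ω` a nondegenerate alternating bilinear form on `V`
such that `ω v w = 0` whenever `v ∈ V j`, `w ∈ V k` and `j + k ≠ 1`. Assume the grading is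
definite, i.e. `V k = 0` for all `k < 0`. Then `V k = 0` for all `k ≥ 2` as well, so that
`V = V 0 ⊕ V 1`. -/
theorem definite_grading_concentrated_in_degrees_zero_one
    (V : Type*) [AddCommGroup V] [Module ℂ V] [FiniteDimensional ℂ V]
    (Vgr : ℤ → Submodule ℂ V) (hInt : DirectSum.IsInternal Vgr)
    (ω : V →ₗ[ℂ] V →ₗ[ℂ] ℂ)
    (halt : ∀ v : V, ω v v = 0)
    (hnd : ∀ v : V, (∀ w : V, ω v w = 0) → v = 0)
    (hwt : ∀ j k : ℤ, j + k ≠ 1 → ∀ v ∈ Vgr j, ∀ w ∈ Vgr k, ω v w = 0)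
    (hdef : ∀ k : ℤ, k < 0 → Vgr k = ⊥) :
    (∀ k : ℤ, 2 ≤ k → Vgr k = ⊥) ∧ IsCompl (Vgr 0) (Vgr 1) := by
  have htop : (⨆ k, Vgr k) = ⊤ := hInt.submodule_iSup_eq_top
  have hvanish : ∀ k : ℤ, 2 ≤ k → Vgr k = ⊥ := by
    intro k hk
    rw [Submodule.eq_bot_iff]
    intro v hv
    apply hnd
    intro w
    have hw : w ∈ (⨆ j, Vgr j) := by rw [htop]; trivial
    refine Submodule.iSup_induction _ (motive := fun w => ω v w = 0) hw ?_ ?_ ?_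
    · intro j w hw
      by_cases h : k + j = 1
      · have hj : j < 0 := by omega
        rw [hdef j hj, Submodule.mem_bot] at hw
        rw [hw, map_zero]
      · exact hwt k j h v hv w hw
    · simp
    · intro w₁ w₂ h1 h2
      rw [map_add, h1, h2, add_zero]
  refine ⟨hvanish, ?_, ?_⟩
  · exact (hInt.submodule_iSupIndep.pairwiseDisjoint (by norm_num : (0:ℤ) ≠ 1))
  · rw [codisjoint_iff_le_sup]
    rw [← htop]
    apply iSup_le
    intro k
    rcases lt_trichotomy k 0 with h | h | h
    · rw [hdef k h]; exact bot_le
    · subst h; exact le_sup_left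
    · rcases eq_or_lt_of_le (show (1:ℤ) ≤ k by omega) with h1 | h1
      · rw [← h1]; exact le_sup_right
      · rw [hvanish k (by omega)]; exact bot_le
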